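/- Over-approximation of the inflated QMI set (Proposition 4): if 𝐀 ≻ 0, 𝐐 := 𝐁ᵀ𝐀⁻¹𝐁 - 𝐂 ⪰ 0, and C(γ) is the set of matrices within operator-norm distance γ of 𝒞 = { Z : 𝐂 + 𝐁ᵀZ + Zᵀ𝐁 + Zᵀ𝐀Z ⪯ 0 }, then C(γ) ⊆ 𝒞̄ := { Z : 𝐂̄ + 𝐁ᵀZ + Zᵀ𝐁 + Zᵀ𝐀Z ⪯ 0 }, where 𝐂̄ = 𝐂 - (2γ‖𝐀^{1/2}‖‖𝐐^{1/2}‖ + γ²‖𝐀‖) Iₙ. -/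

import Mathlib

open Matrix

/-- operator (induced 2-) norm of a real matrix -/
noncomputable def opNorm {m n : Type*} [Fintype m] [Fintype n] [DecidableEq n]
    (M : Matrix m n ℝ) : ℝ :=
  ‖LinearMap.toContinuousLinearMap (Matrix.toEuclideanLin M)‖

open scoped ComplexOrder in
/-- The positive semidefinite square root of a positive semidefinite matrix
(the definition of `Matrix.PosSemidef.sqrt` in the older Mathlib, since removed) -/
noncomputable def Matrix.PosSemidef.sqrt {n : Type*} [Fintype n] [DecidableEq n] {𝕜 : Type*}
    [RCLike 𝕜] {A : Matrix n n 𝕜} (hA : Matrix.PosSemidef A) : Matrix n n 𝕜 :=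
  hA.1.eigenvectorUnitary.1 * diagonal ((↑) ∘ (√·) ∘ hA.1.eigenvalues) *
  (star hA.1.eigenvectorUnitary : Matrix n n 𝕜)

lemma psd_sqrt_herm {n : Type*} [Fintype n] [DecidableEq n] {A : Matrix n n ℝ}
    (hA : A.PosSemidef) : hA.sqrt.IsHermitian := by
  unfold Matrix.PosSemidef.sqrt
  rw [IsHermitian, conjTranspose_mul, conjTranspose_mul, Matrix.star_eq_conjTranspose,
    conjTranspose_conjTranspose, diagonal_conjTranspose, Matrix.mul_assoc]
  rw [star_trivial]

lemma psd_sqrt_mul_self {n : Type*} [Fintype n] [DecidableEq n] {A : Matrix n n ℝ}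
    (hA : A.PosSemidef) : hA.sqrt * hA.sqrt = A := by
  conv_rhs => rw [hA.1.spectral_theorem]
  unfold Matrix.PosSemidef.sqrt
  have hU : (star hA.1.eigenvectorUnitary : Matrix n n ℝ) * hA.1.eigenvectorUnitary.1 = 1 :=
    Unitary.star_mul_self_of_mem hA.1.eigenvectorUnitary.2
  have hD : diagonal ((RCLike.ofReal : ℝ → ℝ) ∘ (√·) ∘ hA.1.eigenvalues) *
      diagonal ((RCLike.ofReal : ℝ → ℝ) ∘ (√·) ∘ hA.1.eigenvalues)
      = diagonal (RCLike.ofReal ∘ hA.1.eigenvalues : n → ℝ) := by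
    rw [diagonal_mul_diagonal]
    congr 1; funext i
    simp [Real.mul_self_sqrt (hA.eigenvalues_nonneg i)]
  simp only [Unitary.conjStarAlgAut_apply]
  rw [show ∀ a b c d e f : Matrix n n ℝ, a * b * c * (d * e * f) = a * (b * (c * d) * e) * f by
    intros; simp [Matrix.mul_assoc], hU, Matrix.mul_one, hD]

section helpers

variable {m n : Type*} [Fintype m] [Fintype n]

lemma dot_eq_inner' (x y : n → ℝ) :
    x ⬝ᵥ y = inner ℝ ((WithLp.equiv 2 (n → ℝ)).symm x) ((WithLp.equiv 2 (n → ℝ)).symm y) := by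
  simp [PiLp.inner_apply, dotProduct, RCLike.inner_apply, mul_comm]

lemma opNorm_nonneg' [DecidableEq n] (M : Matrix m n ℝ) : 0 ≤ opNorm M := norm_nonneg _

lemma norm_mulVec_le' [DecidableEq n] (M : Matrix m n ℝ) (x : n → ℝ) :
    ‖(WithLp.equiv 2 (m → ℝ)).symm (M *ᵥ x)‖ ≤ opNorm M * ‖(WithLp.equiv 2 (n → ℝ)).symm x‖ := by
  have := (LinearMap.toContinuousLinearMap (Matrix.toEuclideanLin M)).le_opNorm
    ((WithLp.equiv 2 (n → ℝ)).symm x)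
  simpa [Matrix.toEuclideanLin_apply, opNorm] using this

lemma dot_self_eq_norm_sq (x : n → ℝ) :
    x ⬝ᵥ x = ‖(WithLp.equiv 2 (n → ℝ)).symm x‖ ^ 2 := by
  rw [dot_eq_inner', real_inner_self_eq_norm_sq]

lemma dot_le_norm_mul_norm (x y : n → ℝ) :
    x ⬝ᵥ y ≤ ‖(WithLp.equiv 2 (n → ℝ)).symm x‖ * ‖(WithLp.equiv 2 (n → ℝ)).symm y‖ := by
  rw [dot_eq_inner']
  exact real_inner_le_norm _ _

/-- quadratic form of `Nᵀ * N`. -/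
lemma quad_eq (N : Matrix m n ℝ) (x : n → ℝ) :
    x ⬝ᵥ ((Nᵀ * N) *ᵥ x) = (N *ᵥ x) ⬝ᵥ (N *ᵥ x) := by
  rw [← Matrix.mulVec_mulVec, Matrix.dotProduct_mulVec, Matrix.vecMul_transpose]

end helpers

set_option maxHeartbeats 1000000 in
/-- Proposition 4: over-approximation C(γ) ⊆ 𝒞̄, where
𝐂̄ = 𝐂 - (2γ‖𝐀^{1/2}‖‖𝐐^{1/2}‖ + γ²‖𝐀‖) Iₙ. -/
theorem stmt_4 (p n : ℕ) (A : Matrix (Fin p) (Fin p) ℝ) (B : Matrix (Fin p) (Fin n) ℝ)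
    (C : Matrix (Fin n) (Fin n) ℝ) (hA : A.PosDef) (hC : C.IsSymm)
    (hQ : (Bᵀ * A⁻¹ * B - C).PosSemidef) (γ : ℝ) (hγ : 0 ≤ γ) :
    {Z : Matrix (Fin p) (Fin n) ℝ |
        ∃ Zbar : Matrix (Fin p) (Fin n) ℝ,
          (-(C + Bᵀ * Zbar + Zbarᵀ * B + Zbarᵀ * A * Zbar)).PosSemidef ∧
            opNorm (Z - Zbar) ≤ γ} ⊆
      {Z : Matrix (Fin p) (Fin n) ℝ |
        (-((C - (2 * γ * opNorm hA.posSemidef.sqrt * opNorm hQ.sqrt + γ ^ 2 * opNorm A) •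
              (1 : Matrix (Fin n) (Fin n) ℝ)) + Bᵀ * Z + Zᵀ * B + Zᵀ * A * Z)).PosSemidef} := by
  rintro Z ⟨Zb, hZb, hnorm⟩
  set S := hA.posSemidef.sqrt with hS
  set R := hQ.sqrt with hR
  set c : ℝ := 2 * γ * opNorm S * opNorm R + γ ^ 2 * opNorm A with hc
  have hdet : IsUnit A.det := hA.det_pos.ne'.isUnit
  have hAt : Aᵀ = A := by
    rw [← Matrix.conjTranspose_eq_transpose_of_trivial]; exact hA.1
  have hInvT : A⁻¹ᵀ = A⁻¹ := by rw [Matrix.transpose_nonsing_inv, hAt]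
  have collapse1 : ∀ X : Matrix (Fin p) (Fin n) ℝ, A * (A⁻¹ * X) = X := fun X => by
    rw [← Matrix.mul_assoc, Matrix.mul_nonsing_inv A hdet, Matrix.one_mul]
  have collapse2 : ∀ X : Matrix (Fin p) (Fin n) ℝ, A⁻¹ * (A * X) = X := fun X => by
    rw [← Matrix.mul_assoc, Matrix.nonsing_inv_mul A hdet, Matrix.one_mul]
  have hSt : Sᵀ = S := by
    rw [← Matrix.conjTranspose_eq_transpose_of_trivial]
    exact psd_sqrt_herm hA.posSemidef
  have hSS : S * S = A := psd_sqrt_mul_self hA.posSemidef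
  have hRt : Rᵀ = R := by
    rw [← Matrix.conjTranspose_eq_transpose_of_trivial]
    exact psd_sqrt_herm hQ
  have hRR : R * R = Bᵀ * A⁻¹ * B - C := psd_sqrt_mul_self hQ
  -- the key completion-of-square identity
  have key : ∀ Y : Matrix (Fin p) (Fin n) ℝ,
      C + Bᵀ * Y + Yᵀ * B + Yᵀ * A * Y
        = (Y + A⁻¹ * B)ᵀ * A * (Y + A⁻¹ * B) - (Bᵀ * A⁻¹ * B - C) := by
    intro Y
    simp only [transpose_add, transpose_mul, hInvT, Matrix.add_mul, Matrix.mul_add,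
      Matrix.mul_assoc, collapse1, collapse2]
    abel
  refine Matrix.PosSemidef.of_dotProduct_mulVec_nonneg ?_ ?_
  · -- Hermitian
    rw [Matrix.IsHermitian, Matrix.conjTranspose_eq_transpose_of_trivial]
    simp only [transpose_neg, transpose_add, transpose_sub, transpose_smul, transpose_one,
      transpose_mul, transpose_transpose, hAt, hC.eq, Matrix.mul_assoc]
    abel
  · intro x
    rw [star_trivial]
    have hq : x ⬝ᵥ ((Bᵀ * A⁻¹ * B - C) *ᵥ x) = (R *ᵥ x) ⬝ᵥ (R *ᵥ x) := by
      have h0 : Bᵀ * A⁻¹ * B - C = Rᵀ * R := by rw [hRt, hRR]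
      rw [h0, quad_eq]
    have conj_eq : ∀ Y : Matrix (Fin p) (Fin n) ℝ,
        x ⬝ᵥ ((Yᵀ * A * Y) *ᵥ x) = (S *ᵥ (Y *ᵥ x)) ⬝ᵥ (S *ᵥ (Y *ᵥ x)) := by
      intro Y
      have h0 : (S * Y)ᵀ * (S * Y) = Yᵀ * A * Y := by
        rw [transpose_mul, hSt, Matrix.mul_assoc Yᵀ S (S * Y), ← Matrix.mul_assoc S S Y, hSS,
          ← Matrix.mul_assoc]
      rw [← h0, quad_eq, ← Matrix.mulVec_mulVec]
    -- the bound coming from Zb lying in the original QMI set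
    have hZb2 : x ⬝ᵥ (((Zb + A⁻¹ * B)ᵀ * A * (Zb + A⁻¹ * B)) *ᵥ x)
        ≤ (R *ᵥ x) ⬝ᵥ (R *ᵥ x) := by
      have h1 := hZb.dotProduct_mulVec_nonneg x
      rw [star_trivial, Matrix.neg_mulVec, dotProduct_neg, key Zb, Matrix.sub_mulVec,
        dotProduct_sub, hq] at h1
      linarith
    rw [conj_eq] at hZb2
    -- rewrite the goal
    have expand : -(C - c • (1 : Matrix (Fin n) (Fin n) ℝ) + Bᵀ * Z + Zᵀ * B + Zᵀ * A * Z)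
        = c • (1 : Matrix (Fin n) (Fin n) ℝ) - (C + Bᵀ * Z + Zᵀ * B + Zᵀ * A * Z) := by
      abel
    rw [expand, key Z, Matrix.sub_mulVec, dotProduct_sub, Matrix.sub_mulVec, dotProduct_sub,
      Matrix.smul_mulVec, Matrix.one_mulVec, dotProduct_smul, smul_eq_mul, hq, conj_eq]
    -- vectors
    set δ : Fin p → ℝ := (Z - Zb) *ᵥ x with hδ
    set wb : Fin p → ℝ := S *ᵥ ((Zb + A⁻¹ * B) *ᵥ x) with hwb
    set d : Fin p → ℝ := S *ᵥ δ with hd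
    have hw : S *ᵥ ((Z + A⁻¹ * B) *ᵥ x) = wb + d := by
      rw [hwb, hd, hδ, ← Matrix.mulVec_add]
      congr 1
      rw [← Matrix.add_mulVec]
      congr 1
      abel
    rw [hw]
    -- norms
    set e : ∀ k : ℕ, (Fin k → ℝ) → EuclideanSpace ℝ (Fin k) :=
      fun k v => (WithLp.equiv 2 (Fin k → ℝ)).symm v with he
    have nδ : ‖e p δ‖ ≤ γ * ‖e n x‖ := by
      refine le_trans (norm_mulVec_le' _ _) ?_
      exact mul_le_mul_of_nonneg_right hnorm (norm_nonneg _)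
    have nd : ‖e p d‖ ≤ opNorm S * (γ * ‖e n x‖) := by
      refine le_trans (norm_mulVec_le' _ _) ?_
      exact mul_le_mul_of_nonneg_left nδ (opNorm_nonneg' S)
    have nR : ‖e n (R *ᵥ x)‖ ≤ opNorm R * ‖e n x‖ := norm_mulVec_le' _ _
    -- basic dot-product facts
    have hwbwb : wb ⬝ᵥ wb = ‖e p wb‖ ^ 2 := dot_self_eq_norm_sq wb
    have hRx2 : (R *ᵥ x) ⬝ᵥ (R *ᵥ x) = ‖e n (R *ᵥ x)‖ ^ 2 := dot_self_eq_norm_sq _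
    have hxx : x ⬝ᵥ x = ‖e n x‖ ^ 2 := dot_self_eq_norm_sq x
    have hdd : d ⬝ᵥ d ≤ opNorm A * ‖e p δ‖ ^ 2 := by
      have h1 : d ⬝ᵥ d = δ ⬝ᵥ (A *ᵥ δ) := by
        have h0 : (S * S : Matrix (Fin p) (Fin p) ℝ) = Sᵀ * S := by rw [hSt]
        rw [hd, ← quad_eq S δ, ← h0, hSS]
      have h2 : δ ⬝ᵥ (A *ᵥ δ) ≤ ‖e p δ‖ * ‖e p (A *ᵥ δ)‖ := dot_le_norm_mul_norm _ _
      have h3 : ‖e p (A *ᵥ δ)‖ ≤ opNorm A * ‖e p δ‖ := norm_mulVec_le' _ _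
      nlinarith [norm_nonneg (e p δ)]
    have hwbd : wb ⬝ᵥ d ≤ ‖e p wb‖ * ‖e p d‖ := dot_le_norm_mul_norm _ _
    have hdwb : d ⬝ᵥ wb = wb ⬝ᵥ d := dotProduct_comm _ _
    have nwb : ‖e p wb‖ ≤ opNorm R * ‖e n x‖ := by
      have h1 : ‖e p wb‖ ^ 2 ≤ (opNorm R * ‖e n x‖) ^ 2 := by
        rw [← hwbwb]
        nlinarith [hZb2, hRx2, nR, norm_nonneg (e n (R *ᵥ x))]
      have h2 : (0:ℝ) ≤ opNorm R * ‖e n x‖ := mul_nonneg (opNorm_nonneg' R) (norm_nonneg _)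
      nlinarith [norm_nonneg (e p wb)]
    have hwbd' : wb ⬝ᵥ d ≤ (opNorm R * ‖e n x‖) * (opNorm S * (γ * ‖e n x‖)) :=
      le_trans hwbd (mul_le_mul nwb nd (norm_nonneg _) (mul_nonneg (opNorm_nonneg' R) (norm_nonneg _)))
    have hdd' : d ⬝ᵥ d ≤ opNorm A * (γ * ‖e n x‖) ^ 2 := by
      have hδ2 : ‖e p δ‖ ^ 2 ≤ (γ * ‖e n x‖) ^ 2 := by
        nlinarith [nδ, norm_nonneg (e p δ)]
      nlinarith [opNorm_nonneg' A]
    simp only [dotProduct_add, add_dotProduct]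
    rw [hc, hxx]
    linarith [hZb2, hwbd', hdd', hdwb]
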